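/- For every real N > 0 and every real b with |b| < 1: ∫_{-1}^{1} (1 - bz)^{-2N} · f^{(N)}(z) dz = (1 - b²)^{-N}. -/

import Mathlib

open MeasureTheory Set intervalIntegral

/-- The symmetric Student-r density
`f^(N)(z) = (Γ(N+1/2)/(Γ(N)Γ(1/2))) (1-z²)^(N-1)` on `[-1,1]`. -/
noncomputable def studentPdf (N z : ℝ) : ℝ :=
  if -1 ≤ z ∧ z ≤ 1 then
    Real.Gamma (N + 1 / 2) / (Real.Gamma N * Real.Gamma (1 / 2)) * (1 - z ^ 2) ^ (N - 1)
  else 0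

lemma betaAux (N : ℝ) (hN : 0 < N) :
    ∫ x in (0:ℝ)..1, x ^ (-(1/2):ℝ) * (1-x) ^ (N-1) =
      Real.Gamma (1/2) * Real.Gamma N / Real.Gamma (N + 1/2) := by
  have hβ := Complex.Gamma_mul_Gamma_eq_betaIntegral (s := (1/2:ℂ)) (t := (N:ℂ))
    (by norm_num) (by simpa using hN)
  have hBI : Complex.betaIntegral (1/2) N =
      ((∫ x in (0:ℝ)..1, x ^ (-(1/2):ℝ) * (1-x) ^ (N-1) : ℝ) : ℂ) := by
    rw [Complex.betaIntegral, ← intervalIntegral.integral_ofReal]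
    refine intervalIntegral.integral_congr fun x hx => ?_
    rw [uIcc_of_le (by norm_num : (0:ℝ) ≤ 1)] at hx
    have h1 : (0:ℝ) ≤ 1 - x := by linarith [hx.2]
    push_cast
    rw [Complex.ofReal_cpow hx.1, Complex.ofReal_cpow h1]
    push_cast
    norm_num
  rw [hBI] at hβ
  have hΓ : (0:ℝ) < Real.Gamma (N + 1/2) := Real.Gamma_pos_of_pos (by linarith)
  have h2 : ((1:ℂ)/2) + N = ((N + 1/2 : ℝ) : ℂ) := by push_cast; ring
  rw [h2, Complex.Gamma_ofReal] at hβ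
  rw [show ((1:ℂ)/2) = ((1/2 : ℝ):ℂ) by norm_num, Complex.Gamma_ofReal,
    Complex.Gamma_ofReal, ← Complex.ofReal_mul, ← Complex.ofReal_mul] at hβ
  have := Complex.ofReal_inj.mp hβ
  rw [eq_div_iff hΓ.ne']
  rw [mul_comm]
  exact this.symm

lemma one_sub_sq_rpow {N z : ℝ} (h1 : -1 ≤ z) (h2 : z ≤ 1) :
    (1 - z^2) ^ (N-1) = (1-z) ^ (N-1) * (1+z) ^ (N-1) := by
  rw [← Real.mul_rpow (by linarith) (by linarith)]
  congr 1; ring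

lemma intII0 (N : ℝ) (hN : 0 < N) :
    IntervalIntegrable (fun z : ℝ => (1 - z^2) ^ (N-1)) volume 0 1 := by
  have h1 : IntervalIntegrable (fun z : ℝ => (1-z) ^ (N-1)) volume 0 1 := by
    have := (intervalIntegral.intervalIntegrable_rpow' (by linarith : (-1:ℝ) < N-1)
      (a := 0) (b := 1)).comp_sub_left 1
    norm_num at this
    exact this.symm
  have h2 : ContinuousOn (fun z : ℝ => (1+z) ^ (N-1)) (Set.uIcc 0 1) := by
    apply ContinuousOn.rpow_const (by fun_prop)
    intro x hx
    rw [uIcc_of_le (by norm_num : (0:ℝ) ≤ 1)] at hx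
    exact Or.inl (by nlinarith [hx.1])
  have h3 := h1.mul_continuousOn h2
  rw [intervalIntegrable_iff_integrableOn_Ioc_of_le (by norm_num)] at h3 ⊢
  exact h3.congr_fun (fun z hz => (one_sub_sq_rpow (N := N) (by linarith [hz.1]) hz.2).symm) measurableSet_Ioc

lemma intIIneg (N : ℝ) (hN : 0 < N) :
    IntervalIntegrable (fun z : ℝ => (1 - z^2) ^ (N-1)) volume (-1) 0 := by
  have h1 : IntervalIntegrable (fun z : ℝ => (1+z) ^ (N-1)) volume (-1) 0 := by
    have := (intervalIntegral.intervalIntegrable_rpow' (by linarith : (-1:ℝ) < N-1)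
      (a := 0) (b := 1)).comp_add_right 1
    norm_num at this
    simpa [add_comm] using this
  have h2 : ContinuousOn (fun z : ℝ => (1-z) ^ (N-1)) (Set.uIcc (-1 : ℝ) 0) := by
    apply ContinuousOn.rpow_const (by fun_prop)
    intro x hx
    rw [uIcc_of_le (by norm_num : (-1:ℝ) ≤ 0)] at hx
    exact Or.inl (by nlinarith [hx.2])
  have h3 := h1.continuousOn_mul h2
  rw [intervalIntegrable_iff_integrableOn_Ioc_of_le (by norm_num)] at h3 ⊢
  exact h3.congr_fun (fun z hz => (one_sub_sq_rpow (N := N) (by linarith [hz.1]) (by linarith [hz.2])).symm)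
    measurableSet_Ioc

lemma gII (N : ℝ) (hN : 0 < N) :
    IntervalIntegrable (fun x : ℝ => x ^ (-(1/2):ℝ) * (1-x) ^ (N-1)) volume 0 1 := by
  have h1 : IntervalIntegrable (fun x : ℝ => x ^ (-(1/2):ℝ) * (1-x) ^ (N-1)) volume 0 (1/2) := by
    apply (intervalIntegral.intervalIntegrable_rpow' (by norm_num)).mul_continuousOn
    apply ContinuousOn.rpow_const (by fun_prop)
    intro x hx
    rw [uIcc_of_le (by norm_num : (0:ℝ) ≤ 1/2)] at hx
    exact Or.inl (by intro h; nlinarith [hx.2])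
  have h2 : IntervalIntegrable (fun x : ℝ => x ^ (-(1/2):ℝ) * (1-x) ^ (N-1)) volume (1/2) 1 := by
    have hi : IntervalIntegrable (fun x : ℝ => (1-x) ^ (N-1)) volume (1/2) 1 := by
      have := (intervalIntegral.intervalIntegrable_rpow' (by linarith : (-1:ℝ) < N-1)
        (a := 0) (b := 1/2)).comp_sub_left 1
      norm_num at this
      exact this.symm
    apply hi.continuousOn_mul
    apply ContinuousOn.rpow_const (by fun_prop)
    intro x hx
    rw [uIcc_of_le (by norm_num : (1/2:ℝ) ≤ 1)] at hx
    exact Or.inl (by intro h; nlinarith [hx.1])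
  exact h1.trans h2

lemma int_sq (N : ℝ) (hN : 0 < N) :
    ∫ z in (0:ℝ)..1, 2 * (1 - z^2) ^ (N-1) =
      Real.Gamma (1/2) * Real.Gamma N / Real.Gamma (N + 1/2) := by
  have h1 : ContinuousOn (fun z : ℝ => z^2) (Set.uIcc 0 1) := by fun_prop
  have h2 : ∀ x ∈ Ioo (min (0:ℝ) 1) (max 0 1),
      HasDerivWithinAt (fun z : ℝ => z^2) (2*x) (Ioi x) x := fun x hx => by
    simpa using (hasDerivAt_pow 2 x).hasDerivWithinAt
  have h3 : ContinuousOn (fun x : ℝ => x ^ (-(1/2):ℝ) * (1-x) ^ (N-1))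
      ((fun z : ℝ => z^2) '' Ioo (min 0 1) (max 0 1)) := by
    have hsub : (fun z : ℝ => z^2) '' (Ioo (min 0 1) (max 0 1)) ⊆ Ioo 0 1 := by
      rintro _ ⟨y, hy, rfl⟩
      rw [min_eq_left (by norm_num), max_eq_right (by norm_num)] at hy
      simp only [mem_Ioo]
      constructor <;> nlinarith [hy.1, hy.2]
    refine ContinuousOn.mono ?_ hsub
    apply ContinuousOn.mul
    · exact ContinuousOn.rpow_const (by fun_prop) fun x hx => Or.inl (ne_of_gt hx.1)
    · exact ContinuousOn.rpow_const (by fun_prop) fun x hx => Or.inl (by intro h; nlinarith [hx.2])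
  have h4 : IntegrableOn (fun x : ℝ => x ^ (-(1/2):ℝ) * (1-x) ^ (N-1))
      ((fun z : ℝ => z^2) '' Set.uIcc 0 1) volume := by
    have hsub : (fun z : ℝ => z^2) '' (Set.uIcc 0 1) ⊆ Icc 0 1 := by
      rintro _ ⟨y, hy, rfl⟩
      rw [uIcc_of_le (by norm_num : (0:ℝ) ≤ 1)] at hy
      simp only [mem_Icc]
      constructor <;> nlinarith [hy.1, hy.2]
    refine IntegrableOn.mono_set ?_ hsub
    exact (intervalIntegrable_iff_integrableOn_Icc_of_le (by norm_num)).mp (gII N hN)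
  have h5 : IntegrableOn
      (fun z : ℝ => (2*z) • ((fun x : ℝ => x ^ (-(1/2):ℝ) * (1-x) ^ (N-1)) ∘ fun z : ℝ => z^2) z)
      (Set.uIcc 0 1) volume := by
    rw [uIcc_of_le (by norm_num : (0:ℝ) ≤ 1), integrableOn_Icc_iff_integrableOn_Ioc]
    have hI : IntegrableOn (fun z : ℝ => 2 * (1 - z^2) ^ (N-1)) (Ioc 0 1) volume := by
      rw [← intervalIntegrable_iff_integrableOn_Ioc_of_le (by norm_num)]
      exact (intII0 N hN).const_mul 2
    refine hI.congr_fun (fun z hz => ?_) measurableSet_Ioc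
    have hz0 : 0 < z := hz.1
    have h2 : ((z^2 : ℝ)) ^ (-(1/2):ℝ) = z⁻¹ := by
      rw [← Real.rpow_natCast z 2, ← Real.rpow_mul hz0.le]
      norm_num
      exact (Real.rpow_neg_one z).trans rfl
    simp only [Function.comp, smul_eq_mul, h2]
    field_simp
  have key := intervalIntegral.integral_comp_smul_deriv''' h1 h2 h3 h4 h5
  simp only [Function.comp] at key
  rw [show ((0:ℝ)^2) = 0 by norm_num, show ((1:ℝ)^2) = 1 by norm_num] at key
  rw [betaAux N hN] at key
  rw [← key]
  rw [intervalIntegral.integral_of_le (by norm_num), intervalIntegral.integral_of_le (by norm_num)]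
  apply setIntegral_congr_fun measurableSet_Ioc
  intro z hz
  have hz0 : 0 < z := hz.1
  have h2 : ((z^2 : ℝ)) ^ (-(1/2):ℝ) = z⁻¹ := by
    rw [← Real.rpow_natCast z 2, ← Real.rpow_mul hz0.le]
    norm_num
    exact (Real.rpow_neg_one z).trans rfl
  simp only [smul_eq_mul, h2]
  field_simp

lemma int_full (N : ℝ) (hN : 0 < N) :
    ∫ z in (-1:ℝ)..1, (1 - z^2) ^ (N-1) =
      Real.Gamma (1/2) * Real.Gamma N / Real.Gamma (N + 1/2) := by
  have hsplit := intervalIntegral.integral_add_adjacent_intervals (intIIneg N hN) (intII0 N hN)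
  have hneg : ∫ z in (-1:ℝ)..0, (1 - z^2) ^ (N-1) = ∫ z in (0:ℝ)..1, (1 - z^2) ^ (N-1) := by
    have h := intervalIntegral.integral_comp_neg (a := (0:ℝ)) (b := 1)
      (fun z : ℝ => (1 - z^2) ^ (N-1))
    simp only [neg_sq, neg_zero] at h
    rw [← h]
  have h2 : ∫ z in (0:ℝ)..1, 2 * (1 - z^2) ^ (N-1)
      = 2 * ∫ z in (0:ℝ)..1, (1 - z^2) ^ (N-1) := intervalIntegral.integral_const_mul 2 _
  rw [int_sq N hN] at h2
  rw [← hsplit, hneg]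
  linarith [h2]

lemma studentPdf_intervalIntegrable (N : ℝ) (hN : 0 < N) :
    IntervalIntegrable (studentPdf N) volume (-1) 1 := by
  have h := ((intIIneg N hN).trans (intII0 N hN)).const_mul
    (Real.Gamma (N + 1/2) / (Real.Gamma N * Real.Gamma (1/2)))
  rw [intervalIntegrable_iff_integrableOn_Ioc_of_le (by norm_num)] at h ⊢
  refine h.congr_fun (fun z hz => ?_) measurableSet_Ioc
  rw [studentPdf, if_pos ⟨hz.1.le, hz.2⟩]

lemma studentPdf_norm (N : ℝ) (hN : 0 < N) :
    ∫ z in (-1:ℝ)..1, studentPdf N z = 1 := by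
  have hEq : EqOn (studentPdf N)
      (fun z => Real.Gamma (N + 1/2) / (Real.Gamma N * Real.Gamma (1/2)) * (1 - z^2) ^ (N-1))
      (Set.uIcc (-1:ℝ) 1) := by
    intro z hz
    rw [uIcc_of_le (by norm_num : (-1:ℝ) ≤ 1)] at hz
    rw [studentPdf, if_pos ⟨hz.1, hz.2⟩]
  rw [intervalIntegral.integral_congr hEq, intervalIntegral.integral_const_mul, int_full N hN]
  have g1 : 0 < Real.Gamma (1/2 : ℝ) := Real.Gamma_pos_of_pos (by norm_num)
  have g2 : 0 < Real.Gamma N := Real.Gamma_pos_of_pos hN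
  have g3 : 0 < Real.Gamma (N + 1/2) := Real.Gamma_pos_of_pos (by linarith)
  field_simp

/-- For `N > 0` and `|b| < 1`: `∫_{-1}^1 (1 - bz)^(-2N) f^(N)(z) dz = (1 - b²)^(-N)`. -/
theorem studentPdf_integral (N : ℝ) (hN : 0 < N) (b : ℝ) (hb : |b| < 1) :
    ∫ z in (-1 : ℝ)..1, (1 - b * z) ^ (-(2 * N)) * studentPdf N z = (1 - b ^ 2) ^ (-N) := by
  obtain ⟨hb1, hb2⟩ := abs_lt.mp hb
  have hP : (0:ℝ) < 1 - b^2 := by nlinarith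
  have hD : ∀ t : ℝ, -1 ≤ t → t ≤ 1 → 0 < 1 + b*t := by
    intro t h1 h2
    have habs : |b*t| ≤ |b| := by
      rw [abs_mul]
      exact mul_le_of_le_one_right (abs_nonneg b) (abs_le.mpr ⟨h1, h2⟩)
    have := neg_abs_le (b*t)
    linarith [habs, hb]
  have hD' : ∀ z : ℝ, -1 ≤ z → z ≤ 1 → 0 < 1 - b*z := by
    intro z h1 h2
    have h := hD (-z) (by linarith) (by linarith)
    have e : 1 + b*(-z) = 1 - b*z := by ring
    linarith [e ▸ h]
  have hmem : ∀ t : ℝ, -1 ≤ t → t ≤ 1 → (t+b)/(1+b*t) ∈ Icc (-1:ℝ) 1 := by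
    intro t h1 h2
    have hd := hD t h1 h2
    constructor
    · rw [le_div_iff₀ hd]; nlinarith
    · rw [div_le_one hd]; nlinarith
  have hmemo : ∀ t : ℝ, -1 < t → t < 1 → (t+b)/(1+b*t) ∈ Ioo (-1:ℝ) 1 := by
    intro t h1 h2
    have hd := hD t h1.le h2.le
    constructor
    · rw [lt_div_iff₀ hd]; nlinarith
    · rw [div_lt_one hd]; nlinarith
  -- key pointwise identity
  have hkey : ∀ t ∈ Icc (-1:ℝ) 1,
      ((1-b^2)/(1+b*t)^2) *
        ((1 - b * ((t+b)/(1+b*t))) ^ (-(2*N)) * studentPdf N ((t+b)/(1+b*t)))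
        = (1-b^2)^(-N) * studentPdf N t := by
    intro t ht
    have hd := hD t ht.1 ht.2
    have hu := hmem t ht.1 ht.2
    rw [studentPdf, if_pos ⟨hu.1, hu.2⟩, studentPdf, if_pos ⟨ht.1, ht.2⟩]
    have e1 : 1 - b * ((t+b)/(1+b*t)) = (1-b^2)/(1+b*t) := by
      field_simp
      ring
    have e2 : 1 - ((t+b)/(1+b*t))^2 = (1-t^2) * ((1-b^2)/(1+b*t)^2) := by
      rw [div_pow, one_sub_div (pow_ne_zero 2 hd.ne'), mul_div_assoc']
      congr 1; ring
    rw [e1, e2]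
    have hA : (0:ℝ) ≤ 1-t^2 := by nlinarith [ht.1, ht.2]
    have hD2 : ((1+b*t)^2 : ℝ) = (1+b*t) ^ (2:ℝ) := by
      rw [← Real.rpow_natCast (1+b*t) 2]; norm_num
    rw [Real.mul_rpow hA (by positivity), Real.div_rpow hP.le hd.le,
      Real.div_rpow hP.le (by positivity : (0:ℝ) ≤ (1+b*t)^2), hD2,
      ← Real.rpow_mul hd.le, Real.rpow_neg hd.le (2*N), div_inv_eq_mul]
    have e3 : (1-b^2) ^ (-(2*N)) * (1-b^2) ^ (N-1) * (1-b^2) = (1-b^2) ^ (-N) := by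
      nth_rewrite 3 [← Real.rpow_one (1-b^2)]
      rw [← Real.rpow_add hP, ← Real.rpow_add hP]
      norm_num
      ring_nf
    have e4 : (1+b*t) ^ (2*N) * ((1+b*t) ^ (2:ℝ))⁻¹ * ((1+b*t) ^ ((2:ℝ)*(N-1)))⁻¹ = 1 := by
      rw [← Real.rpow_neg hd.le, ← Real.rpow_neg hd.le, ← Real.rpow_add hd, ← Real.rpow_add hd,
        show 2*N + -(2:ℝ) + -((2:ℝ)*(N-1)) = 0 by ring, Real.rpow_zero]
    have hdne : ((1+b*t) ^ (2:ℝ)) ≠ 0 := by positivity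
    have hdne2 : ((1+b*t) ^ (2*N)) ≠ 0 := by positivity
    linear_combination
      (Real.Gamma (N + 1/2) / (Real.Gamma N * Real.Gamma (1/2)) * (1-t^2) ^ (N-1) *
        ((1+b*t) ^ (2*N) * ((1+b*t) ^ (2:ℝ))⁻¹ * ((1+b*t) ^ ((2:ℝ)*(N-1)))⁻¹)) * e3
      + (Real.Gamma (N + 1/2) / (Real.Gamma N * Real.Gamma (1/2)) * (1-t^2) ^ (N-1) *
        (1-b^2) ^ (-N)) * e4
  -- integrability of the integrand on Icc
  have hgInt : IntegrableOn (fun z : ℝ => (1 - b*z) ^ (-(2*N)) * studentPdf N z)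
      (Icc (-1:ℝ) 1) volume := by
    have hcont : ContinuousOn (fun z : ℝ => (1 - b*z) ^ (-(2*N))) (Set.uIcc (-1:ℝ) 1) := by
      apply ContinuousOn.rpow_const (by fun_prop)
      intro z hz
      rw [uIcc_of_le (by norm_num : (-1:ℝ) ≤ 1)] at hz
      exact Or.inl (hD' z hz.1 hz.2).ne'
    have h := (studentPdf_intervalIntegrable N hN).continuousOn_mul hcont
    rwa [intervalIntegrable_iff_integrableOn_Icc_of_le (by norm_num)] at h
  have h1 : ContinuousOn (fun t : ℝ => (t+b)/(1+b*t)) (Set.uIcc (-1:ℝ) 1) := by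
    apply ContinuousOn.div (by fun_prop) (by fun_prop)
    intro t ht
    rw [uIcc_of_le (by norm_num : (-1:ℝ) ≤ 1)] at ht
    exact (hD t ht.1 ht.2).ne'
  have h2 : ∀ x ∈ Ioo (min (-1:ℝ) 1) (max (-1:ℝ) 1),
      HasDerivWithinAt (fun t : ℝ => (t+b)/(1+b*t)) ((1-b^2)/(1+b*x)^2) (Ioi x) x := by
    intro x hx
    rw [min_eq_left (by norm_num), max_eq_right (by norm_num)] at hx
    have hd := hD x hx.1.le hx.2.le
    have h := (((hasDerivAt_id x).add_const b).div
      ((hasDerivAt_const x (1:ℝ)).add ((hasDerivAt_id x).const_mul b)) hd.ne')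
    have h' : HasDerivAt (fun t : ℝ => (t+b)/(1+b*t)) ((1-b^2)/(1+b*x)^2) x := by
      refine h.congr_deriv ?_
      simp only [Pi.add_apply, id_eq]
      ring
    exact h'.hasDerivWithinAt
  have h3 : ContinuousOn (fun z : ℝ => (1 - b*z) ^ (-(2*N)) * studentPdf N z)
      ((fun t : ℝ => (t+b)/(1+b*t)) '' Ioo (min (-1:ℝ) 1) (max (-1:ℝ) 1)) := by
    have hsub : (fun t : ℝ => (t+b)/(1+b*t)) '' Ioo (min (-1:ℝ) 1) (max (-1:ℝ) 1)
        ⊆ Ioo (-1:ℝ) 1 := by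
      rintro _ ⟨y, hy, rfl⟩
      rw [min_eq_left (by norm_num), max_eq_right (by norm_num)] at hy
      exact hmemo y hy.1 hy.2
    refine ContinuousOn.mono ?_ hsub
    apply ContinuousOn.mul
    · apply ContinuousOn.rpow_const (by fun_prop)
      intro z hz
      exact Or.inl (hD' z hz.1.le hz.2.le).ne'
    · refine ContinuousOn.congr (f := fun z : ℝ =>
        Real.Gamma (N + 1/2) / (Real.Gamma N * Real.Gamma (1/2)) * (1 - z^2) ^ (N-1)) ?_ ?_
      · apply ContinuousOn.mul continuousOn_const
        apply ContinuousOn.rpow_const (by fun_prop)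
        intro z hz
        exact Or.inl (by intro h; nlinarith [hz.1, hz.2])
      · intro z hz
        rw [studentPdf, if_pos ⟨hz.1.le, hz.2.le⟩]
  have h4 : IntegrableOn (fun z : ℝ => (1 - b*z) ^ (-(2*N)) * studentPdf N z)
      ((fun t : ℝ => (t+b)/(1+b*t)) '' Set.uIcc (-1:ℝ) 1) volume := by
    refine hgInt.mono_set ?_
    rintro _ ⟨y, hy, rfl⟩
    rw [uIcc_of_le (by norm_num : (-1:ℝ) ≤ 1)] at hy
    exact hmem y hy.1 hy.2
  have h5 : IntegrableOn (fun t : ℝ => ((1-b^2)/(1+b*t)^2) •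
      ((fun z : ℝ => (1 - b*z) ^ (-(2*N)) * studentPdf N z) ∘ fun t : ℝ => (t+b)/(1+b*t)) t)
      (Set.uIcc (-1:ℝ) 1) volume := by
    rw [uIcc_of_le (by norm_num : (-1:ℝ) ≤ 1)]
    have hI : IntegrableOn (fun t : ℝ => (1-b^2)^(-N) * studentPdf N t)
        (Icc (-1:ℝ) 1) volume := by
      have h := (studentPdf_intervalIntegrable N hN).const_mul ((1-b^2)^(-N))
      rwa [intervalIntegrable_iff_integrableOn_Icc_of_le (by norm_num)] at h
    refine hI.congr_fun (fun t ht => ?_) measurableSet_Icc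
    simp only [Function.comp, smul_eq_mul]
    exact (hkey t ht).symm
  have key := intervalIntegral.integral_comp_smul_deriv''' h1 h2 h3 h4 h5
  simp only [Function.comp] at key
  have e1 : ((-1:ℝ)+b)/(1+b*(-1)) = -1 := by
    rw [div_eq_iff (by nlinarith : (1+b*(-1):ℝ) ≠ 0)]; ring
  have e2 : ((1:ℝ)+b)/(1+b*1) = 1 := by
    rw [div_eq_iff (by nlinarith : (1+b*1:ℝ) ≠ 0)]; ring
  rw [e1, e2] at key
  rw [← key]
  have heq : EqOn
      (fun t : ℝ => ((1-b^2)/(1+b*t)^2) •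
        ((1 - b*((t+b)/(1+b*t))) ^ (-(2*N)) * studentPdf N ((t+b)/(1+b*t))))
      (fun t : ℝ => (1-b^2)^(-N) * studentPdf N t) (Set.uIcc (-1:ℝ) 1) := by
    intro t ht
    rw [uIcc_of_le (by norm_num : (-1:ℝ) ≤ 1)] at ht
    simp only [smul_eq_mul]
    exact hkey t ht
  rw [intervalIntegral.integral_congr heq, intervalIntegral.integral_const_mul,
    studentPdf_norm N hN, mul_one]
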